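/- Let A and B be n×n complex matrices with A real symmetric, invertible, and neither positive nor negative semidefinite (i.e., non-positive, non-negative, non-degenerate), and B symmetric complex-valued. If for every ξ ∈ ℝⁿ, ⟨Aξ,ξ⟩ = 0 implies ⟨Bξ,ξ⟩ = 0, then there exists λ ∈ ℂ such that B = λA. -/

import Mathlib

open Matrix

section Aux

variable {n : ℕ} {R : Type*} [CommRing R]

lemma aux_symm (M : Matrix (Fin n) (Fin n) R) (hM : M.IsSymm) (u v : Fin n → R) :
    u ⬝ᵥ M *ᵥ v = v ⬝ᵥ M *ᵥ u := by
  rw [dotProduct_mulVec, ← vecMul_transpose, hM.eq, dotProduct_comm]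

lemma aux_expand3 (M : Matrix (Fin n) (Fin n) R) (hM : M.IsSymm) (x e f : Fin n → R) (s t : R) :
    (x + s • e + t • f) ⬝ᵥ M *ᵥ (x + s • e + t • f) =
      x ⬝ᵥ M *ᵥ x + s * s * (e ⬝ᵥ M *ᵥ e) + t * t * (f ⬝ᵥ M *ᵥ f)
        + 2 * s * (x ⬝ᵥ M *ᵥ e) + 2 * t * (x ⬝ᵥ M *ᵥ f) + 2 * (s * t) * (e ⬝ᵥ M *ᵥ f) := by
  simp only [mulVec_add, mulVec_smul, add_dotProduct, dotProduct_add, smul_dotProduct,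
    dotProduct_smul, smul_eq_mul]
  rw [aux_symm M hM e x, aux_symm M hM f x, aux_symm M hM f e]
  ring

lemma aux_expand2 (M : Matrix (Fin n) (Fin n) R) (hM : M.IsSymm) (u v : Fin n → R) :
    (u + v) ⬝ᵥ M *ᵥ (u + v) =
      u ⬝ᵥ M *ᵥ u + v ⬝ᵥ M *ᵥ v + 2 * (u ⬝ᵥ M *ᵥ v) := by
  simp only [mulVec_add, add_dotProduct, dotProduct_add]
  rw [aux_symm M hM v u]
  ring

lemma aux_smul_smul (M : Matrix (Fin n) (Fin n) R) (a b : R) (u v : Fin n → R) :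
    (a • u) ⬝ᵥ M *ᵥ (b • v) = a * b * (u ⬝ᵥ M *ᵥ v) := by
  simp only [smul_dotProduct, mulVec_smul, dotProduct_smul, smul_eq_mul]
  ring

lemma aux_smul_right (M : Matrix (Fin n) (Fin n) R) (b : R) (u v : Fin n → R) :
    u ⬝ᵥ M *ᵥ (b • v) = b * (u ⬝ᵥ M *ᵥ v) := by
  simp only [mulVec_smul, dotProduct_smul, smul_eq_mul]

lemma aux_cvec_add {n : ℕ} (x y : Fin n → ℝ) :
    (fun i => ((x + y) i : ℂ)) = (fun i => (x i : ℂ)) + (fun i => (y i : ℂ)) := by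
  funext i
  simp only [Pi.add_apply]
  push_cast
  ring

lemma aux_cvec_smul {n : ℕ} (s : ℝ) (x : Fin n → ℝ) :
    (fun i => ((s • x) i : ℂ)) = (s : ℂ) • (fun i => (x i : ℂ)) := by
  funext i
  simp only [Pi.smul_apply, smul_eq_mul]
  push_cast
  ring

lemma aux_cvec_single {n : ℕ} (i : Fin n) :
    (fun k => ((Pi.single i 1 : Fin n → ℝ) k : ℂ)) = (Pi.single i 1 : Fin n → ℂ) := by
  funext k
  by_cases hk : k = i <;> simp [Pi.single_apply, hk]

end Aux

theorem stmt_0 (n : ℕ) (A : Matrix (Fin n) (Fin n) ℝ) (B : Matrix (Fin n) (Fin n) ℂ)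
    (hAsymm : A.IsSymm) (hAinv : IsUnit A)
    (hpos : ∃ ξ : Fin n → ℝ, 0 < ξ ⬝ᵥ A.mulVec ξ)
    (hneg : ∃ ξ : Fin n → ℝ, ξ ⬝ᵥ A.mulVec ξ < 0)
    (hBsymm : B.IsSymm)
    (h : ∀ ξ : Fin n → ℝ, ξ ⬝ᵥ A.mulVec ξ = 0 →
      (fun i => (ξ i : ℂ)) ⬝ᵥ B.mulVec (fun i => (ξ i : ℂ)) = 0) :
    ∃ lam : ℂ, B = lam • A.map (fun r => (r : ℂ)) := by
  classical
  obtain ⟨p, hp⟩ := hpos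
  obtain ⟨q, hq⟩ := hneg
  -- construct e with ⟨Ae,e⟩ = 1
  obtain ⟨e, aee⟩ : ∃ e : Fin n → ℝ, e ⬝ᵥ A *ᵥ e = 1 := by
    refine ⟨(Real.sqrt (p ⬝ᵥ A *ᵥ p))⁻¹ • p, ?_⟩
    have hsp : Real.sqrt (p ⬝ᵥ A *ᵥ p) ≠ 0 := by positivity
    rw [aux_smul_smul]
    rw [show (p ⬝ᵥ A *ᵥ p) = Real.sqrt (p ⬝ᵥ A *ᵥ p) * Real.sqrt (p ⬝ᵥ A *ᵥ p) from
      (Real.mul_self_sqrt hp.le).symm]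
    field_simp
    rw [Real.sqrt_sq (Real.sqrt_nonneg _)]
  -- construct f with ⟨Af,f⟩ = -1, ⟨Ae,f⟩ = 0
  obtain ⟨f, aff, aef⟩ : ∃ f : Fin n → ℝ, f ⬝ᵥ A *ᵥ f = -1 ∧ e ⬝ᵥ A *ᵥ f = 0 := by
    set α0 : ℝ := e ⬝ᵥ A *ᵥ q with hα0
    have aef0 : e ⬝ᵥ A *ᵥ (q + (-α0) • e) = 0 := by
      rw [mulVec_add, dotProduct_add, aux_smul_right, aee, ← hα0]
      ring
    have aff0 : (q + (-α0) • e) ⬝ᵥ A *ᵥ (q + (-α0) • e) = q ⬝ᵥ A *ᵥ q - α0 * α0 := by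
      rw [aux_expand2 A hAsymm, aux_smul_smul, aux_smul_right, aee,
        aux_symm A hAsymm q e, ← hα0]
      ring
    have hf0neg : (q + (-α0) • e) ⬝ᵥ A *ᵥ (q + (-α0) • e) < 0 := by
      rw [aff0]; nlinarith [mul_self_nonneg α0]
    set f0 : Fin n → ℝ := q + (-α0) • e with hf0
    have hsf : Real.sqrt (-(f0 ⬝ᵥ A *ᵥ f0)) ≠ 0 := by
      have : (0:ℝ) < -(f0 ⬝ᵥ A *ᵥ f0) := by linarith
      positivity
    refine ⟨(Real.sqrt (-(f0 ⬝ᵥ A *ᵥ f0)))⁻¹ • f0, ?_, ?_⟩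
    · rw [aux_smul_smul]
      rw [show (f0 ⬝ᵥ A *ᵥ f0)
          = -(Real.sqrt (-(f0 ⬝ᵥ A *ᵥ f0)) * Real.sqrt (-(f0 ⬝ᵥ A *ᵥ f0))) by
        rw [Real.mul_self_sqrt (by linarith : (0:ℝ) ≤ -(f0 ⬝ᵥ A *ᵥ f0))]; ring]
      field_simp
      rw [Real.sqrt_sq (Real.sqrt_nonneg _)]
    · rw [aux_smul_right, aef0, mul_zero]
  -- values of B-form on e, f
  obtain ⟨lam, hbee, hbff, hbef⟩ : ∃ lam : ℂ,
      (fun i => (e i : ℂ)) ⬝ᵥ B *ᵥ (fun i => (e i : ℂ)) = lam ∧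
      (fun i => (f i : ℂ)) ⬝ᵥ B *ᵥ (fun i => (f i : ℂ)) = -lam ∧
      (fun i => (e i : ℂ)) ⬝ᵥ B *ᵥ (fun i => (f i : ℂ)) = 0 := by
    have hnull_epf : (e + f) ⬝ᵥ A *ᵥ (e + f) = 0 := by
      rw [aux_expand2 A hAsymm, aee, aff, aef]; ring
    have hnull_emf : (e + (-1 : ℝ) • f) ⬝ᵥ A *ᵥ (e + (-1 : ℝ) • f) = 0 := by
      rw [aux_expand2 A hAsymm, aux_smul_smul, aux_smul_right, aee, aff, aef]; ring
    have hbpf := h _ hnull_epf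
    have hbmf := h _ hnull_emf
    rw [aux_cvec_add, aux_expand2 B hBsymm] at hbpf
    rw [aux_cvec_add, aux_cvec_smul, aux_expand2 B hBsymm, aux_smul_smul,
      aux_smul_right] at hbmf
    push_cast at hbmf
    refine ⟨(fun i => (e i : ℂ)) ⬝ᵥ B *ᵥ (fun i => (e i : ℂ)), rfl, ?_, ?_⟩
    · linear_combination (hbpf + hbmf) / 2
    · linear_combination (hbpf - hbmf) / 4
  -- main pointwise identity
  have main : ∀ x : Fin n → ℝ,
      (fun i => (x i : ℂ)) ⬝ᵥ B *ᵥ (fun i => (x i : ℂ)) = lam * ((x ⬝ᵥ A *ᵥ x : ℝ) : ℂ) := by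
    intro x
    obtain ⟨α, hα⟩ : ∃ a : ℝ, x ⬝ᵥ A *ᵥ e = a := ⟨_, rfl⟩
    obtain ⟨β, hβ⟩ : ∃ a : ℝ, x ⬝ᵥ A *ᵥ f = a := ⟨_, rfl⟩
    obtain ⟨c, hc⟩ : ∃ a : ℝ, x ⬝ᵥ A *ᵥ x = a := ⟨_, rfl⟩
    obtain ⟨u, hu⟩ : ∃ z : ℂ,
      (fun i => (x i : ℂ)) ⬝ᵥ B *ᵥ (fun i => (e i : ℂ)) - lam * (α : ℂ) = z := ⟨_, rfl⟩
    obtain ⟨v, hv⟩ : ∃ z : ℂ,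
      (fun i => (x i : ℂ)) ⬝ᵥ B *ᵥ (fun i => (f i : ℂ)) - lam * (β : ℂ) = z := ⟨_, rfl⟩
    obtain ⟨w, hw⟩ : ∃ z : ℂ,
      (fun i => (x i : ℂ)) ⬝ᵥ B *ᵥ (fun i => (x i : ℂ)) - lam * (c : ℂ) = z := ⟨_, rfl⟩
    have key : ∀ s t : ℝ,
        (x + s • e + t • f) ⬝ᵥ A *ᵥ (x + s • e + t • f) = 0 →
        w + 2 * (s : ℂ) * u + 2 * (t : ℂ) * v = 0 := by
      intro s t hn
      have hb := h _ hn
      rw [aux_cvec_add (x + s • e) (t • f), aux_cvec_add x (s • e), aux_cvec_smul,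
        aux_cvec_smul, aux_expand3 B hBsymm, hbee, hbff, hbef] at hb
      rw [aux_expand3 A hAsymm, aee, aff, aef, hα, hβ, hc] at hn
      have hnC := congrArg (fun r : ℝ => (r : ℂ)) hn
      push_cast at hnC
      rw [← hu, ← hv, ← hw]
      linear_combination hb - lam * hnC
    have nullt : ∀ s r : ℝ, r ^ 2 = β ^ 2 + c + 2 * s * α + s ^ 2 →
        (x + s • e + (β + r) • f) ⬝ᵥ A *ᵥ (x + s • e + (β + r) • f) = 0 := by
      intro s r hr
      rw [aux_expand3 A hAsymm, aee, aff, aef, hα, hβ, hc]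
      linear_combination -hr
    obtain ⟨Z, hZ⟩ : ∃ z : ℝ, c + β ^ 2 - α ^ 2 = z := ⟨_, rfl⟩
    have habs : ∀ k : ℝ, 0 ≤ k →
        β ^ 2 + c + 2 * (Real.sqrt (|Z| + k) - α) * α + (Real.sqrt (|Z| + k) - α) ^ 2
          = |Z| + k + Z := by
      intro k hk
      have hs := Real.sq_sqrt (show (0:ℝ) ≤ |Z| + k by positivity)
      linear_combination hs + hZ
    have step : ∀ s r : ℝ, 0 < r → r ^ 2 = β ^ 2 + c + 2 * s * α + s ^ 2 →
        v = 0 ∧ w + 2 * (s : ℂ) * u = 0 := by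
      intro s r hrpos hr
      have e1 := key s (β + r) (nullt s r hr)
      have e2 := key s (β + (-r)) (nullt s (-r) (by rw [← hr]; ring))
      push_cast at e1 e2
      have hv0 : v = 0 := by
        have hrne : (r : ℂ) ≠ 0 := by exact_mod_cast hrpos.ne'
        have h4 : (r : ℂ) * v = 0 := by linear_combination (e1 - e2) / 4
        exact (mul_eq_zero.mp h4).resolve_left hrne
      refine ⟨hv0, ?_⟩
      rw [hv0] at e1
      linear_combination e1
    have hpos1 : (0:ℝ) < |Z| + 1 + Z := by cases abs_cases Z <;> linarith
    have hpos2 : (0:ℝ) < |Z| + 4 + Z := by cases abs_cases Z <;> linarith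
    have hd1 : (Real.sqrt (|Z| + 1 + Z)) ^ 2
        = β ^ 2 + c + 2 * (Real.sqrt (|Z| + 1) - α) * α + (Real.sqrt (|Z| + 1) - α) ^ 2 := by
      rw [Real.sq_sqrt hpos1.le]
      exact (habs 1 (by norm_num)).symm
    have hd2 : (Real.sqrt (|Z| + 4 + Z)) ^ 2
        = β ^ 2 + c + 2 * (Real.sqrt (|Z| + 4) - α) * α + (Real.sqrt (|Z| + 4) - α) ^ 2 := by
      rw [Real.sq_sqrt hpos2.le]
      exact (habs 4 (by norm_num)).symm
    obtain ⟨hv0, E1⟩ := step _ _ (Real.sqrt_pos.mpr hpos1) hd1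
    obtain ⟨-, E2⟩ := step _ _ (Real.sqrt_pos.mpr hpos2) hd2
    have hs12 : Real.sqrt (|Z| + 1) - α < Real.sqrt (|Z| + 4) - α := by
      have := Real.sqrt_lt_sqrt (show (0:ℝ) ≤ |Z| + 1 by positivity)
        (show (|Z|:ℝ) + 1 < |Z| + 4 by linarith)
      linarith
    have hu0 : u = 0 := by
      have hne : ((Real.sqrt (|Z| + 1) - α : ℝ) : ℂ)
          - ((Real.sqrt (|Z| + 4) - α : ℝ) : ℂ) ≠ 0 := by
        rw [sub_ne_zero]
        exact_mod_cast hs12.ne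
      have h4 : (((Real.sqrt (|Z| + 1) - α : ℝ) : ℂ)
          - ((Real.sqrt (|Z| + 4) - α : ℝ) : ℂ)) * u = 0 := by
        linear_combination (E1 - E2) / 2
      exact (mul_eq_zero.mp h4).resolve_left hne
    have hw0 : w = 0 := by
      rw [hu0] at E1
      linear_combination E1
    rw [hc]
    linear_combination hw + hw0
  -- polarization to bilinear identity
  have bil : ∀ x y : Fin n → ℝ,
      (fun i => (x i : ℂ)) ⬝ᵥ B *ᵥ (fun i => (y i : ℂ)) = lam * ((x ⬝ᵥ A *ᵥ y : ℝ) : ℂ) := by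
    intro x y
    have h1 := main (x + y)
    have h2 := main x
    have h3 := main y
    rw [aux_cvec_add, aux_expand2 B hBsymm] at h1
    have ea : (((x + y) ⬝ᵥ A *ᵥ (x + y) : ℝ) : ℂ)
        = ((x ⬝ᵥ A *ᵥ x : ℝ) : ℂ) + ((y ⬝ᵥ A *ᵥ y : ℝ) : ℂ) + 2 * ((x ⬝ᵥ A *ᵥ y : ℝ) : ℂ) := by
      exact_mod_cast congrArg (fun r : ℝ => (r : ℂ)) (aux_expand2 A hAsymm x y)
    rw [ea] at h1
    linear_combination (h1 - h2 - h3) / 2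
  refine ⟨lam, ?_⟩
  ext i j
  have hb := bil (Pi.single i 1) (Pi.single j 1)
  rw [aux_cvec_single, aux_cvec_single] at hb
  simp only [mulVec_single, dotProduct_single, single_dotProduct, mul_one, one_mul,
    MulOpposite.op_one, one_smul, Matrix.col_apply] at hb
  simp only [Matrix.smul_apply, Matrix.map_apply, smul_eq_mul]
  exact hb
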